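/- Assume Setting (P) with 3 ≤ m < n/2. For x, y, z, s, w ∈ ℝⁿ define P₃(x,y,z,s,w) := ( |x−s|²|x−w|²|y−z|² − |x−y|²|x−z|²|s−w|² )² and P₂(x,y,z,s,w) := |x−y|^{n−2m+4}|x−z|^{n−2m+4}|x−s|^{n−2m+4}|x−w|^{n−2m+4}. Then for every x ∈ ℝⁿ: (1/2) ∫∫∫∫_{(ℝⁿ)⁴} P₃(x,y,z,s,w)/P₂(x,y,z,s,w) dμ(y)dμ(z)dμ(s)dμ(w) = u(x)² A₃(x) − A(u)(x)². -/

import Mathlib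

open MeasureTheory Metric Filter
open scoped RealInnerProductSpace

/-- The Euclidean Laplacian of `f : ℝⁿ → ℝ`. -/
noncomputable def lap {n : ℕ} (f : EuclideanSpace ℝ (Fin n) → ℝ) :
    EuclideanSpace ℝ (Fin n) → ℝ :=
  fun x => ∑ i : Fin n,
    iteratedFDeriv ℝ 2 f x ![EuclideanSpace.single i 1, EuclideanSpace.single i 1]

/-- The Riesz potential `u(x) = ∫ |x-y|^{2m-n} dμ(y)`. -/
noncomputable def pu (n m : ℕ) (μ : Measure (EuclideanSpace ℝ (Fin n))) :
    EuclideanSpace ℝ (Fin n) → ℝ :=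
  fun x => ∫ y, ‖x - y‖ ^ (2 * (m : ℝ) - n) ∂μ

/-- `A(u)(x) = ∬ |y-z|² |x-y|^{2m-n-2} |x-z|^{2m-n-2} dμ(y)dμ(z)`. -/
noncomputable def Au (n m : ℕ) (μ : Measure (EuclideanSpace ℝ (Fin n))) :
    EuclideanSpace ℝ (Fin n) → ℝ :=
  fun x => ∫ q : EuclideanSpace ℝ (Fin n) × EuclideanSpace ℝ (Fin n),
    ‖q.1 - q.2‖ ^ 2 * ‖x - q.1‖ ^ (2 * (m : ℝ) - n - 2) * ‖x - q.2‖ ^ (2 * (m : ℝ) - n - 2)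
    ∂(μ.prod μ)

/-- `A₁(x) = ∬ |y-z|²(|x-y|²+|x-z|²) |x-y|^{2m-n-4} |x-z|^{2m-n-4} dμ(y)dμ(z)`. -/
noncomputable def A1 (n m : ℕ) (μ : Measure (EuclideanSpace ℝ (Fin n))) :
    EuclideanSpace ℝ (Fin n) → ℝ :=
  fun x => ∫ q : EuclideanSpace ℝ (Fin n) × EuclideanSpace ℝ (Fin n),
    ‖q.1 - q.2‖ ^ 2 * (‖x - q.1‖ ^ 2 + ‖x - q.2‖ ^ 2)
      * ‖x - q.1‖ ^ (2 * (m : ℝ) - n - 4) * ‖x - q.2‖ ^ (2 * (m : ℝ) - n - 4)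
    ∂(μ.prod μ)

/-- `A₂(x) = ∭ |y-z|²(|x-z|²|y-s|² + |x-y|²|z-s|²)
|x-y|^{2m-n-4} |x-z|^{2m-n-4} |x-s|^{2m-n-2} dμ(y)dμ(z)dμ(s)`. -/
noncomputable def A2 (n m : ℕ) (μ : Measure (EuclideanSpace ℝ (Fin n))) :
    EuclideanSpace ℝ (Fin n) → ℝ :=
  fun x => ∫ q : EuclideanSpace ℝ (Fin n) × EuclideanSpace ℝ (Fin n) × EuclideanSpace ℝ (Fin n),
    ‖q.1 - q.2.1‖ ^ 2
      * (‖x - q.2.1‖ ^ 2 * ‖q.1 - q.2.2‖ ^ 2 + ‖x - q.1‖ ^ 2 * ‖q.2.1 - q.2.2‖ ^ 2)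
      * ‖x - q.1‖ ^ (2 * (m : ℝ) - n - 4) * ‖x - q.2.1‖ ^ (2 * (m : ℝ) - n - 4)
      * ‖x - q.2.2‖ ^ (2 * (m : ℝ) - n - 2)
    ∂(μ.prod (μ.prod μ))

/-- `A₃(x) = ∬ |y-z|⁴ |x-y|^{2m-n-4} |x-z|^{2m-n-4} dμ(y)dμ(z)`. -/
noncomputable def A3 (n m : ℕ) (μ : Measure (EuclideanSpace ℝ (Fin n))) :
    EuclideanSpace ℝ (Fin n) → ℝ :=
  fun x => ∫ q : EuclideanSpace ℝ (Fin n) × EuclideanSpace ℝ (Fin n),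
    ‖q.1 - q.2‖ ^ 4 * ‖x - q.1‖ ^ (2 * (m : ℝ) - n - 4) * ‖x - q.2‖ ^ (2 * (m : ℝ) - n - 4)
    ∂(μ.prod μ)

section Helpers

/-- The basic two-point kernel `|y-z|^k |x-y|^a |x-z|^a`. -/
noncomputable def kern {n : ℕ} (x : EuclideanSpace ℝ (Fin n)) (k : ℕ) (a : ℝ) :
    EuclideanSpace ℝ (Fin n) × EuclideanSpace ℝ (Fin n) → ℝ :=
  fun r => ‖r.1 - r.2‖ ^ k * ‖x - r.1‖ ^ a * ‖x - r.2‖ ^ a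

lemma sigmaFinite_of_riesz {n m : ℕ} (hmn : 2 * m < n) (hm : 3 ≤ m)
    (μ : Measure (EuclideanSpace ℝ (Fin n)))
    (hμ : ∀ (x : EuclideanSpace ℝ (Fin n)) (k : ℕ), k ≤ 4 →
      Integrable (fun y => ‖x - y‖ ^ (2 * (m : ℝ) - n - k)) μ) :
    SigmaFinite μ := by
  have hn : 0 < n := by omega
  have hmR : (2 * (m : ℝ)) < n := by exact_mod_cast hmn
  set x₁ : EuclideanSpace ℝ (Fin n) := 0 with hx₁
  set x₂ : EuclideanSpace ℝ (Fin n) := EuclideanSpace.single ⟨0, hn⟩ 1 with hx₂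
  have hx12 : x₁ ≠ x₂ := by
    intro h
    have := congrArg (fun v : EuclideanSpace ℝ (Fin n) => v ⟨0, hn⟩) h
    simp [hx₁, hx₂, EuclideanSpace.single_apply] at this
  set f : EuclideanSpace ℝ (Fin n) → ℝ := fun y =>
    ‖x₁ - y‖ ^ (2 * (m : ℝ) - n - (0 : ℕ)) + ‖x₂ - y‖ ^ (2 * (m : ℝ) - n - (0 : ℕ)) with hf
  have hfi : Integrable f μ := (hμ x₁ 0 (by norm_num)).add (hμ x₂ 0 (by norm_num))
  have hfpos : ∀ y, 0 < f y := by
    intro y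
    rcases ne_or_eq y x₁ with h | h
    · have h1 : 0 < ‖x₁ - y‖ := by
        rw [norm_pos_iff, sub_ne_zero]; exact (Ne.symm h)
      exact add_pos_of_pos_of_nonneg (Real.rpow_pos_of_pos h1 _)
        (Real.rpow_nonneg (norm_nonneg _) _)
    · have h2 : 0 < ‖x₂ - y‖ := by
        rw [norm_pos_iff, sub_ne_zero]
        rw [h]; exact (Ne.symm hx12)
      exact add_pos_of_nonneg_of_pos (Real.rpow_nonneg (norm_nonneg _) _)
        (Real.rpow_pos_of_pos h2 _)
  constructor
  refine ⟨⟨fun k => {y | (1 : ℝ) / (k + 1) ≤ f y}, fun _ => trivial, fun k => ?_, ?_⟩⟩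
  · exact hfi.measure_ge_lt_top (by positivity)
  · ext y
    simp only [Set.mem_iUnion, Set.mem_setOf_eq, Set.mem_univ, iff_true]
    obtain ⟨k, hk⟩ := exists_nat_one_div_lt (hfpos y)
    exact ⟨k, le_of_lt (by exact_mod_cast hk)⟩

lemma integrable_kern {n m : ℕ} (hmn : 2 * m < n)
    (μ : Measure (EuclideanSpace ℝ (Fin n))) [SigmaFinite μ]
    (hμ : ∀ (x : EuclideanSpace ℝ (Fin n)) (k : ℕ), k ≤ 4 →
      Integrable (fun y => ‖x - y‖ ^ (2 * (m : ℝ) - n - k)) μ)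
    (x : EuclideanSpace ℝ (Fin n)) (k : ℕ) (hk : k ≤ 4) (a : ℝ)
    (ha : a = 2 * (m : ℝ) - n - k) :
    Integrable (kern x k a) (μ.prod μ) := by
  have hmR : (2 * (m : ℝ)) < n := by exact_mod_cast hmn
  have hg : Integrable (fun y => ‖x - y‖ ^ a) μ := by rw [ha]; exact hμ x k hk
  have hg0 : Integrable (fun y => ‖x - y‖ ^ (2 * (m : ℝ) - n)) μ := by
    have := hμ x 0 (by norm_num); simpa using this
  have hD : Integrable (fun p : EuclideanSpace ℝ (Fin n) × EuclideanSpace ℝ (Fin n) =>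
      (2 : ℝ) ^ k * (‖x - p.1‖ ^ (2 * (m : ℝ) - n) * ‖x - p.2‖ ^ a
        + ‖x - p.1‖ ^ a * ‖x - p.2‖ ^ (2 * (m : ℝ) - n))) (μ.prod μ) :=
    ((hg0.mul_prod hg).add (hg.mul_prod hg0)).const_mul _
  have hsum : (k : ℝ) + a = 2 * (m : ℝ) - n := by rw [ha]; ring
  have hsumne : (k : ℝ) + a ≠ 0 := by
    rw [hsum]; exact (by linarith : 2 * (m : ℝ) - n < 0).ne
  have hid : ∀ r : ℝ, 0 ≤ r → r ^ k * r ^ a = r ^ (2 * (m : ℝ) - n) := by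
    intro r hr
    calc r ^ k * r ^ a = r ^ (k : ℝ) * r ^ a := by rw [Real.rpow_natCast]
      _ = r ^ ((k : ℝ) + a) := (Real.rpow_add' hr hsumne).symm
      _ = r ^ (2 * (m : ℝ) - n) := by rw [hsum]
  refine hD.mono ?_ (Filter.Eventually.of_forall fun p => ?_)
  · exact ((((measurable_fst.sub measurable_snd).norm.pow_const k).mul
      ((measurable_const.sub measurable_fst).norm.pow_const a)).mul
      ((measurable_const.sub measurable_snd).norm.pow_const a)).aestronglyMeasurable
  · have hb : (0 : ℝ) ≤ ‖x - p.1‖ := norm_nonneg _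
    have hc : (0 : ℝ) ≤ ‖x - p.2‖ := norm_nonneg _
    have ht : (0 : ℝ) ≤ ‖p.1 - p.2‖ := norm_nonneg _
    set b := ‖x - p.1‖
    set c := ‖x - p.2‖
    set t := ‖p.1 - p.2‖ with htdef
    have htr : t ≤ b + c := by
      calc t = ‖(p.1 - x) + (x - p.2)‖ := by rw [sub_add_sub_cancel]
        _ ≤ ‖p.1 - x‖ + ‖x - p.2‖ := norm_add_le _ _
        _ = b + c := by rw [norm_sub_rev]
    have hmax : (max b c) ^ k ≤ b ^ k + c ^ k := by
      rcases le_total b c with h | h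
      · rw [max_eq_right h]; exact le_add_of_nonneg_left (pow_nonneg hb k)
      · rw [max_eq_left h]; exact le_add_of_nonneg_right (pow_nonneg hc k)
    have hpow : t ^ k ≤ 2 ^ k * (b ^ k + c ^ k) := by
      calc t ^ k ≤ (b + c) ^ k := pow_le_pow_left₀ ht htr k
        _ ≤ (2 * max b c) ^ k := by
            refine pow_le_pow_left₀ (by positivity) ?_ k
            rcases le_total b c with h | h
            · rw [max_eq_right h]; linarith
            · rw [max_eq_left h]; linarith
        _ = 2 ^ k * (max b c) ^ k := mul_pow _ _ _
        _ ≤ 2 ^ k * (b ^ k + c ^ k) := by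
            exact mul_le_mul_of_nonneg_left hmax (by positivity)
    have hba : (0 : ℝ) ≤ b ^ a := Real.rpow_nonneg hb _
    have hca : (0 : ℝ) ≤ c ^ a := Real.rpow_nonneg hc _
    have hker : kern x k a p = t ^ k * b ^ a * c ^ a := rfl
    rw [Real.norm_of_nonneg (by rw [hker]; positivity),
      Real.norm_of_nonneg (by positivity), hker]
    calc t ^ k * b ^ a * c ^ a = t ^ k * (b ^ a * c ^ a) := by ring
      _ ≤ (2 ^ k * (b ^ k + c ^ k)) * (b ^ a * c ^ a) :=
          mul_le_mul_of_nonneg_right hpow (by positivity)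
      _ = 2 ^ k * ((b ^ k * b ^ a) * c ^ a + b ^ a * (c ^ k * c ^ a)) := by ring
      _ = 2 ^ k * (b ^ (2 * (m : ℝ) - n) * c ^ a + b ^ a * c ^ (2 * (m : ℝ) - n)) := by
          rw [hid b hb, hid c hc]

lemma key_pointwise {n m : ℕ} (hmn : 2 * m < n)
    (x y z s w : EuclideanSpace ℝ (Fin n)) :
    (‖x - s‖ ^ 2 * ‖x - w‖ ^ 2 * ‖y - z‖ ^ 2
        - ‖x - y‖ ^ 2 * ‖x - z‖ ^ 2 * ‖s - w‖ ^ 2) ^ 2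
      / (‖x - y‖ ^ ((n : ℝ) - 2 * m + 4) * ‖x - z‖ ^ ((n : ℝ) - 2 * m + 4)
          * ‖x - s‖ ^ ((n : ℝ) - 2 * m + 4) * ‖x - w‖ ^ ((n : ℝ) - 2 * m + 4))
    = kern x 4 (2 * (m : ℝ) - n - 4) (y, z) * kern x 0 (2 * (m : ℝ) - n) (s, w)
      + kern x 0 (2 * (m : ℝ) - n) (y, z) * kern x 4 (2 * (m : ℝ) - n - 4) (s, w)
      - 2 * (kern x 2 (2 * (m : ℝ) - n - 2) (y, z)
          * kern x 2 (2 * (m : ℝ) - n - 2) (s, w)) := by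
  have hmR : (2 * (m : ℝ)) < n := by exact_mod_cast hmn
  have hE : ((n : ℝ) - 2 * m + 4) ≠ 0 := (by linarith : (0:ℝ) < (n : ℝ) - 2 * m + 4).ne'
  have hA4 : (2 * (m : ℝ) - n - 4) ≠ 0 := (by linarith : 2 * (m : ℝ) - n - 4 < 0).ne
  have hA2 : (2 * (m : ℝ) - n - 2) ≠ 0 := (by linarith : 2 * (m : ℝ) - n - 2 < 0).ne
  have hA0 : (2 * (m : ℝ) - n) ≠ 0 := (by linarith : 2 * (m : ℝ) - n < 0).ne
  simp only [kern, pow_zero, one_mul]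
  rcases (norm_nonneg (x - y)).eq_or_lt with hb | hb
  · rw [← hb]
    simp [Real.zero_rpow hE, Real.zero_rpow hA4, Real.zero_rpow hA2, Real.zero_rpow hA0]
  rcases (norm_nonneg (x - z)).eq_or_lt with hc | hc
  · rw [← hc]
    simp [Real.zero_rpow hE, Real.zero_rpow hA4, Real.zero_rpow hA2, Real.zero_rpow hA0]
  rcases (norm_nonneg (x - s)).eq_or_lt with hd | hd
  · rw [← hd]
    simp [Real.zero_rpow hE, Real.zero_rpow hA4, Real.zero_rpow hA2, Real.zero_rpow hA0]
  rcases (norm_nonneg (x - w)).eq_or_lt with he | he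
  · rw [← he]
    simp [Real.zero_rpow hE, Real.zero_rpow hA4, Real.zero_rpow hA2, Real.zero_rpow hA0]
  have e4 : ∀ r : ℝ, 0 < r →
      r ^ (2 * (m : ℝ) - n) = r ^ (2 * (m : ℝ) - n - 4) * r ^ (4 : ℕ) := by
    intro r hr
    rw [← Real.rpow_natCast r 4, ← Real.rpow_add hr]
    congr 1
    push_cast; ring
  have e2 : ∀ r : ℝ, 0 < r →
      r ^ (2 * (m : ℝ) - n - 2) = r ^ (2 * (m : ℝ) - n - 4) * r ^ (2 : ℕ) := by
    intro r hr
    rw [← Real.rpow_natCast r 2, ← Real.rpow_add hr]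
    congr 1
    push_cast; ring
  have eE : ∀ r : ℝ, 0 < r →
      r ^ ((n : ℝ) - 2 * m + 4) = (r ^ (2 * (m : ℝ) - n - 4))⁻¹ := by
    intro r hr
    rw [show ((n : ℝ) - 2 * m + 4) = -(2 * (m : ℝ) - n - 4) by ring, Real.rpow_neg hr.le]
  rw [e4 _ hb, e4 _ hc, e4 _ hd, e4 _ he, e2 _ hb, e2 _ hc, e2 _ hd, e2 _ he,
    eE _ hb, eE _ hc, eE _ hd, eE _ he]
  have hB : (0 : ℝ) < ‖x - y‖ ^ (2 * (m : ℝ) - n - 4) := Real.rpow_pos_of_pos hb _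
  have hC : (0 : ℝ) < ‖x - z‖ ^ (2 * (m : ℝ) - n - 4) := Real.rpow_pos_of_pos hc _
  have hD : (0 : ℝ) < ‖x - s‖ ^ (2 * (m : ℝ) - n - 4) := Real.rpow_pos_of_pos hd _
  have hE' : (0 : ℝ) < ‖x - w‖ ^ (2 * (m : ℝ) - n - 4) := Real.rpow_pos_of_pos he _
  field_simp
  ring

end Helpers

/-- `(1/2) ∬∬ P₃/P₂ dμ⁴ = u²A₃ - A(u)²`. -/
theorem quadruple_integral_P3
    (n m : ℕ) (hmn : 2 * m < n)
    (μ : Measure (EuclideanSpace ℝ (Fin n)))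
    (hμ : ∀ (x : EuclideanSpace ℝ (Fin n)) (k : ℕ), k ≤ 4 →
      Integrable (fun y => ‖x - y‖ ^ (2 * (m : ℝ) - n - k)) μ)
    (hm : 3 ≤ m) :
    ∀ x : EuclideanSpace ℝ (Fin n),
      let P₃ : EuclideanSpace ℝ (Fin n) → EuclideanSpace ℝ (Fin n) →
          EuclideanSpace ℝ (Fin n) → EuclideanSpace ℝ (Fin n) → ℝ :=
        fun y z s w =>
          (‖x - s‖ ^ 2 * ‖x - w‖ ^ 2 * ‖y - z‖ ^ 2
            - ‖x - y‖ ^ 2 * ‖x - z‖ ^ 2 * ‖s - w‖ ^ 2) ^ 2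
      let P₂ : EuclideanSpace ℝ (Fin n) → EuclideanSpace ℝ (Fin n) →
          EuclideanSpace ℝ (Fin n) → EuclideanSpace ℝ (Fin n) → ℝ :=
        fun y z s w => ‖x - y‖ ^ ((n : ℝ) - 2 * m + 4) * ‖x - z‖ ^ ((n : ℝ) - 2 * m + 4)
          * ‖x - s‖ ^ ((n : ℝ) - 2 * m + 4) * ‖x - w‖ ^ ((n : ℝ) - 2 * m + 4)
      (1 / 2 : ℝ) * (∫ q : EuclideanSpace ℝ (Fin n) × EuclideanSpace ℝ (Fin n) ×
            EuclideanSpace ℝ (Fin n) × EuclideanSpace ℝ (Fin n),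
          P₃ q.1 q.2.1 q.2.2.1 q.2.2.2 / P₂ q.1 q.2.1 q.2.2.1 q.2.2.2
          ∂(μ.prod (μ.prod (μ.prod μ))))
        = pu n m μ x ^ 2 * A3 n m μ x - Au n m μ x ^ 2 := by
  intro x
  haveI : SigmaFinite μ := sigmaFinite_of_riesz hmn hm μ hμ
  show (1 / 2 : ℝ) * (∫ q : EuclideanSpace ℝ (Fin n) × EuclideanSpace ℝ (Fin n) ×
        EuclideanSpace ℝ (Fin n) × EuclideanSpace ℝ (Fin n),
      (‖x - q.2.2.1‖ ^ 2 * ‖x - q.2.2.2‖ ^ 2 * ‖q.1 - q.2.1‖ ^ 2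
          - ‖x - q.1‖ ^ 2 * ‖x - q.2.1‖ ^ 2 * ‖q.2.2.1 - q.2.2.2‖ ^ 2) ^ 2
        / (‖x - q.1‖ ^ ((n : ℝ) - 2 * m + 4) * ‖x - q.2.1‖ ^ ((n : ℝ) - 2 * m + 4)
            * ‖x - q.2.2.1‖ ^ ((n : ℝ) - 2 * m + 4) * ‖x - q.2.2.2‖ ^ ((n : ℝ) - 2 * m + 4))
      ∂(μ.prod (μ.prod (μ.prod μ))))
    = pu n m μ x ^ 2 * A3 n m μ x - Au n m μ x ^ 2
  have i4 : Integrable (kern x 4 (2 * (m : ℝ) - n - 4)) (μ.prod μ) :=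
    integrable_kern hmn μ hμ x 4 (by norm_num) _ (by norm_num)
  have i2 : Integrable (kern x 2 (2 * (m : ℝ) - n - 2)) (μ.prod μ) :=
    integrable_kern hmn μ hμ x 2 (by norm_num) _ (by norm_num)
  have i0 : Integrable (kern x 0 (2 * (m : ℝ) - n)) (μ.prod μ) :=
    integrable_kern hmn μ hμ x 0 (by norm_num) _ (by norm_num)
  have hmp := MeasureTheory.measurePreserving_prodAssoc μ μ (μ.prod μ)
  have hcomp := (hmp.integral_comp MeasurableEquiv.prodAssoc.measurableEmbedding
      (fun q : EuclideanSpace ℝ (Fin n) × EuclideanSpace ℝ (Fin n) ×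
          EuclideanSpace ℝ (Fin n) × EuclideanSpace ℝ (Fin n) =>
        (‖x - q.2.2.1‖ ^ 2 * ‖x - q.2.2.2‖ ^ 2 * ‖q.1 - q.2.1‖ ^ 2
            - ‖x - q.1‖ ^ 2 * ‖x - q.2.1‖ ^ 2 * ‖q.2.2.1 - q.2.2.2‖ ^ 2) ^ 2
          / (‖x - q.1‖ ^ ((n : ℝ) - 2 * m + 4) * ‖x - q.2.1‖ ^ ((n : ℝ) - 2 * m + 4)
              * ‖x - q.2.2.1‖ ^ ((n : ℝ) - 2 * m + 4)
              * ‖x - q.2.2.2‖ ^ ((n : ℝ) - 2 * m + 4)))).symm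
  rw [hcomp]
  have hpt : (fun p : (EuclideanSpace ℝ (Fin n) × EuclideanSpace ℝ (Fin n)) ×
        EuclideanSpace ℝ (Fin n) × EuclideanSpace ℝ (Fin n) =>
        (‖x - (MeasurableEquiv.prodAssoc p).2.2.1‖ ^ 2
            * ‖x - (MeasurableEquiv.prodAssoc p).2.2.2‖ ^ 2
            * ‖(MeasurableEquiv.prodAssoc p).1 - (MeasurableEquiv.prodAssoc p).2.1‖ ^ 2
          - ‖x - (MeasurableEquiv.prodAssoc p).1‖ ^ 2
            * ‖x - (MeasurableEquiv.prodAssoc p).2.1‖ ^ 2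
            * ‖(MeasurableEquiv.prodAssoc p).2.2.1 - (MeasurableEquiv.prodAssoc p).2.2.2‖ ^ 2) ^ 2
          / (‖x - (MeasurableEquiv.prodAssoc p).1‖ ^ ((n : ℝ) - 2 * m + 4)
              * ‖x - (MeasurableEquiv.prodAssoc p).2.1‖ ^ ((n : ℝ) - 2 * m + 4)
              * ‖x - (MeasurableEquiv.prodAssoc p).2.2.1‖ ^ ((n : ℝ) - 2 * m + 4)
              * ‖x - (MeasurableEquiv.prodAssoc p).2.2.2‖ ^ ((n : ℝ) - 2 * m + 4)))
      = fun p => kern x 4 (2 * (m : ℝ) - n - 4) p.1 * kern x 0 (2 * (m : ℝ) - n) p.2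
          + kern x 0 (2 * (m : ℝ) - n) p.1 * kern x 4 (2 * (m : ℝ) - n - 4) p.2
          - 2 * (kern x 2 (2 * (m : ℝ) - n - 2) p.1 * kern x 2 (2 * (m : ℝ) - n - 2) p.2) := by
    funext p
    exact key_pointwise hmn x p.1.1 p.1.2 p.2.1 p.2.2
  rw [hpt]
  have iadd : Integrable (fun p : (EuclideanSpace ℝ (Fin n) × EuclideanSpace ℝ (Fin n)) ×
        EuclideanSpace ℝ (Fin n) × EuclideanSpace ℝ (Fin n) =>
      kern x 4 (2 * (m : ℝ) - n - 4) p.1 * kern x 0 (2 * (m : ℝ) - n) p.2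
        + kern x 0 (2 * (m : ℝ) - n) p.1 * kern x 4 (2 * (m : ℝ) - n - 4) p.2)
      ((μ.prod μ).prod (μ.prod μ)) := (i4.mul_prod i0).add (i0.mul_prod i4)
  have isub : Integrable (fun p : (EuclideanSpace ℝ (Fin n) × EuclideanSpace ℝ (Fin n)) ×
        EuclideanSpace ℝ (Fin n) × EuclideanSpace ℝ (Fin n) =>
      2 * (kern x 2 (2 * (m : ℝ) - n - 2) p.1 * kern x 2 (2 * (m : ℝ) - n - 2) p.2))
      ((μ.prod μ).prod (μ.prod μ)) := (i2.mul_prod i2).const_mul 2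
  rw [integral_sub iadd isub,
    integral_add (i4.mul_prod i0) (i0.mul_prod i4), integral_const_mul,
    MeasureTheory.integral_prod_mul (kern x 4 (2 * (m : ℝ) - n - 4)) (kern x 0 (2 * (m : ℝ) - n)),
    MeasureTheory.integral_prod_mul (kern x 0 (2 * (m : ℝ) - n)) (kern x 4 (2 * (m : ℝ) - n - 4)),
    MeasureTheory.integral_prod_mul (kern x 2 (2 * (m : ℝ) - n - 2)) (kern x 2 (2 * (m : ℝ) - n - 2))]
  have hA3 : ∫ r, kern x 4 (2 * (m : ℝ) - n - 4) r ∂(μ.prod μ) = A3 n m μ x := rfl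
  have hAu : ∫ r, kern x 2 (2 * (m : ℝ) - n - 2) r ∂(μ.prod μ) = Au n m μ x := rfl
  have hpu : ∫ r, kern x 0 (2 * (m : ℝ) - n) r ∂(μ.prod μ) = pu n m μ x * pu n m μ x := by
    have h : (fun r : EuclideanSpace ℝ (Fin n) × EuclideanSpace ℝ (Fin n) =>
          kern x 0 (2 * (m : ℝ) - n) r)
        = fun r => (fun y => ‖x - y‖ ^ (2 * (m : ℝ) - n)) r.1
            * (fun y => ‖x - y‖ ^ (2 * (m : ℝ) - n)) r.2 := by
      funext r; simp [kern]
    rw [h]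
    exact MeasureTheory.integral_prod_mul (fun y => ‖x - y‖ ^ (2 * (m : ℝ) - n))
      (fun y => ‖x - y‖ ^ (2 * (m : ℝ) - n))
  rw [hA3, hAu, hpu]
  ring
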